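/- Let $X$ be an elliptic curve and $E$ a semistable algebraic vector bundle on $X$ of degree zero. Then $E$ admits an algebraic connection. -/
import Mathlib

/-!
STATEMENT 4. Let `X` be an elliptic curve and `E` a semistable algebraic vector
bundle on `X` of degree zero.  Then `E` admits an algebraic connection.

Abstract interface for bundles on `X` with degree, rank, subbundles, direct
summands and connections.  Background fact (Atiyah–Weil): a vector bundle on a
smooth complex projective curve admits an algebraic connection if and only if each
of its direct summands has degree zero.
-/
theorem semistable_degree_zero_admits_connection
    (VB : Type) (deg : VB → ℤ) (rk : VB → ℕ)
    (Sub : VB → VB → Prop)          -- subbundle relation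
    (Conn : VB → Type)              -- algebraic connections
    (Summand : VB → VB → Prop)      -- `Summand W' W` : `W'` is a direct summand of `W`
    -- Atiyah–Weil criterion
    (hAW : ∀ W : VB, (∀ W', Summand W' W → deg W' = 0) → Nonempty (Conn W))
    -- a direct summand is in particular a subbundle
    (hsub : ∀ W' W : VB, Summand W' W → Sub W' W)
    -- a direct summand has a complementary direct summand
    (hcompl : ∀ W' W : VB, Summand W' W → ∃ W'', Summand W'' W ∧
      deg W' + deg W'' = deg W ∧ rk W' + rk W'' = rk W)
    -- a direct summand is either nonzero or the zero bundle (of degree zero)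
    (hrk : ∀ W' W : VB, Summand W' W → 0 < rk W' ∨ deg W' = 0)
    -- the data of the statement: `E` semistable of degree zero
    (E : VB)
    (hss : ∀ F, Sub F E → 0 < rk F → deg F * (rk E : ℤ) ≤ deg E * (rk F : ℤ))
    (hdegE : deg E = 0) :
    Nonempty (Conn E) := by
  apply hAW
  intro W' hW'
  rcases hrk W' E hW' with hpos | hz
  · obtain ⟨W'', hW'', hdeg, hrkE⟩ := hcompl W' E hW'
    have hrkEpos : 0 < rk E := by omega
    have h1 : deg W' * (rk E : ℤ) ≤ 0 := by
      have := hss W' (hsub W' E hW') hpos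
      simpa [hdegE] using this
    rcases hrk W'' E hW'' with hpos'' | hz''
    · have h2 : deg W'' * (rk E : ℤ) ≤ 0 := by
        have := hss W'' (hsub W'' E hW'') hpos''
        simpa [hdegE] using this
      have hsum : deg W' + deg W'' = 0 := by rw [hdeg, hdegE]
      nlinarith [Int.natCast_pos.mpr hrkEpos]
    · have hsum : deg W' + deg W'' = 0 := by rw [hdeg, hdegE]
      omega
  · exact hz
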